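/- arXiv:1107.4291 — 5 statements merged into one kernel-verified Lean document; each statement's English description precedes it below -/
import Mathlib

section
/- Given a crossed module v : N → Q and a group homomorphism φ : P → Q, the pullback φ*(N) = {(n, p) ∈ N × P | v(n) = φ(p)} with the P-action ᵖ'(n, p) = (^{φ(p')}n, p'pp'⁻¹) and the map v̄(n, p) = p is a crossed module over P. -/
/-- The pullback `φ*(N) = {(n,p) | v(n) = φ(p)}` of a crossed module `v : N → Q` along
`φ : P → Q`, with `P`-action `ᵖ'(n,p) = (^{φ(p')}n, p'pp'⁻¹)` and boundary `v̄(n,p) = p`,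
is a crossed module over `P`: the fiber product is a subgroup of `N × P`, the action
preserves it and is compatible with `v̄` (CM1), and the Peiffer identity (CM2) holds. -/
theorem stmt_3 {N P Q : Type*} [Group N] [Group P] [Group Q]
    (v : N →* Q) (a : Q →* MulAut N)
    (cm1 : ∀ (q : Q) (n : N), v (a q n) = q * v n * q⁻¹)
    (cm2 : ∀ n n' : N, a (v n) n' = n * n' * n⁻¹)
    (φ : P →* Q) :
    (∃ S : Subgroup (N × P), ∀ x : N × P, x ∈ S ↔ v x.1 = φ x.2) ∧
    (∀ (p : P) (x : N × P), v x.1 = φ x.2 → v (a (φ p) x.1) = φ (p * x.2 * p⁻¹)) ∧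
    (∀ x y : N × P, v x.1 = φ x.2 → v y.1 = φ y.2 →
      (a (φ x.2) y.1, x.2 * y.2 * x.2⁻¹) = (x.1 * y.1 * x.1⁻¹, x.2 * y.2 * x.2⁻¹)) := by
  refine ⟨⟨{ carrier := {x | v x.1 = φ x.2}
             mul_mem' := ?_
             one_mem' := ?_
             inv_mem' := ?_ }, fun x => Iff.rfl⟩, ?_, ?_⟩
  · intro x y hx hy
    simp only [Set.mem_setOf_eq, Prod.fst_mul, Prod.snd_mul, map_mul] at *
    rw [hx, hy]
  · simp
  · intro x hx
    simp only [Set.mem_setOf_eq, Prod.fst_inv, Prod.snd_inv, map_inv] at *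
    rw [hx]
  · intro p x hx
    rw [cm1, hx, map_mul, map_mul, map_inv]
  · intro x y hx hy
    rw [← hx, cm2]
end

section
/- Let μ : M → P be a crossed module and φ : P → Q a surjective group homomorphism with kernel K. Then the induced crossed module φ*(M) is isomorphic as a crossed Q-module to M/[K,M], where [K,M] is the subgroup of M generated by all ᵏm·m⁻¹ for k ∈ K, m ∈ M. Specifically: [K,M] is a normal subgroup of M stable under the P-action, K acts trivially on M/[K,M], so M/[K,M] carries a Q ≅ P/K-action, and the induced map M/[K,M] → Q is a crossed module satisfying the universal property of the induced crossed module. -/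
/-- For a crossed module `μ : M → P` and a surjective `φ : P → Q` with kernel `K`, the
induced crossed module `φ*(M)` is `M/[K,M]`: the subgroup `[K,M]` generated by the
elements `ᵏm·m⁻¹` is normal and `P`-stable, `K` acts trivially on the quotient (so the
quotient carries a `Q ≅ P/K`-action), the induced map `M/[K,M] → Q` is a crossed module,
and it satisfies the universal property of the induced crossed module. -/
theorem stmt_5 {M P Q B : Type*} [Group M] [Group P] [Group Q] [Group B]
    (μ : M →* P) (aP : P →* MulAut M)
    (cm1M : ∀ (p : P) (m : M), μ (aP p m) = p * μ m * p⁻¹)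
    (cm2M : ∀ m m' : M, aP (μ m) m' = m * m' * m⁻¹)
    (φ : P →* Q) (hφ : Function.Surjective φ)
    -- an arbitrary crossed `Q`-module `(B, Q, v)` …
    (v : B →* Q) (aB : Q →* MulAut B)
    (cm1B : ∀ (q : Q) (b : B), v (aB q b) = q * v b * q⁻¹)
    (cm2B : ∀ b b' : B, aB (v b) b' = b * b' * b⁻¹)
    -- … together with a crossed module morphism `(h, φ) : (M,P,μ) → (B,Q,v)`
    (h : M →* B)
    (hcomm : ∀ m, v (h m) = φ (μ m))
    (hequiv : ∀ (p : P) (m : M), h (aP p m) = aB (φ p) (h m)) :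
    (Subgroup.closure {x : M | ∃ k ∈ φ.ker, ∃ m : M, x = aP k m * m⁻¹}).Normal ∧
    (∀ (p : P) (x : M),
      x ∈ Subgroup.normalClosure {x : M | ∃ k ∈ φ.ker, ∃ m : M, x = aP k m * m⁻¹} →
      aP p x ∈ Subgroup.normalClosure {x : M | ∃ k ∈ φ.ker, ∃ m : M, x = aP k m * m⁻¹}) ∧
    (∀ k ∈ φ.ker, ∀ m : M,
      (QuotientGroup.mk (aP k m) :
        M ⧸ Subgroup.normalClosure {x : M | ∃ k ∈ φ.ker, ∃ m : M, x = aP k m * m⁻¹}) =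
      QuotientGroup.mk m) ∧
    ∃ μbar : (M ⧸ Subgroup.normalClosure
        {x : M | ∃ k ∈ φ.ker, ∃ m : M, x = aP k m * m⁻¹}) →* Q,
      (∀ m : M, μbar (QuotientGroup.mk m) = φ (μ m)) ∧
      -- CM1 for the quotient, at the level of representatives
      (∀ (p : P) (m : M), μbar (QuotientGroup.mk (aP p m)) =
        φ p * μbar (QuotientGroup.mk m) * (φ p)⁻¹) ∧
      -- CM2 (Peiffer identity) for the quotient, at the level of representatives
      (∀ m n : M,
        (QuotientGroup.mk (aP (μ m) n) :
          M ⧸ Subgroup.normalClosure {x : M | ∃ k ∈ φ.ker, ∃ m : M, x = aP k m * m⁻¹}) =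
        QuotientGroup.mk m * QuotientGroup.mk n * (QuotientGroup.mk m)⁻¹) ∧
      -- universal property: `h` factors uniquely through the quotient as a
      -- crossed `Q`-module morphism
      ∃! h' : (M ⧸ Subgroup.normalClosure
          {x : M | ∃ k ∈ φ.ker, ∃ m : M, x = aP k m * m⁻¹}) →* B,
        (∀ m : M, h' (QuotientGroup.mk m) = h m) ∧
        (∀ (p : P) (m : M), h' (QuotientGroup.mk (aP p m)) =
          aB (φ p) (h' (QuotientGroup.mk m))) ∧
        (∀ m : M, v (h' (QuotientGroup.mk m)) = μbar (QuotientGroup.mk m)) := by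
  classical
  set S : Set M := {x : M | ∃ k ∈ φ.ker, ∃ m : M, x = aP k m * m⁻¹} with hS
  -- S is stable under the P-action
  have hstab : ∀ (p : P), ∀ x ∈ S, aP p x ∈ S := by
    rintro p x ⟨k, hk, m, rfl⟩
    refine ⟨p * k * p⁻¹, ?_, aP p m, ?_⟩
    · have : φ k = 1 := hk
      simp [MonoidHom.mem_ker, this]
    · have : aP (p * k * p⁻¹) (aP p m) = aP p (aP k m) := by
        rw [← MulAut.mul_apply, ← map_mul, ← MulAut.mul_apply, ← map_mul]
        group
      rw [this, map_mul, map_inv]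
  -- closure S is stable under the P-action
  have hclos : ∀ (p : P), ∀ x ∈ Subgroup.closure S, aP p x ∈ Subgroup.closure S := by
    intro p x hx
    refine Subgroup.closure_induction ?_ ?_ ?_ ?_ hx
    · intro y hy; exact Subgroup.subset_closure (hstab p y hy)
    · simpa using one_mem _
    · intro a b _ _ ha hb; rw [map_mul]; exact mul_mem ha hb
    · intro a _ ha; rw [map_inv]; exact inv_mem ha
  have hnormal : (Subgroup.closure S).Normal := by
    constructor
    intro x hx g
    have := cm2M g x
    rw [← this]
    exact hclos (μ g) x hx
  -- normalClosure = closure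
  have hNC : Subgroup.normalClosure S = Subgroup.closure S := by
    refine le_antisymm ?_ ?_
    · haveI := hnormal
      exact Subgroup.normalClosure_le_normal Subgroup.subset_closure
    · exact (Subgroup.closure_le _).mpr Subgroup.subset_normalClosure
  have hmemN : ∀ k ∈ φ.ker, ∀ m : M, aP k m * m⁻¹ ∈ Subgroup.normalClosure S :=
    fun k hk m => Subgroup.subset_normalClosure ⟨k, hk, m, rfl⟩
  refine ⟨hnormal, ?_, ?_, ?_⟩
  · intro p x hx
    rw [hNC] at hx ⊢
    exact hclos p x hx
  · intro k hk m
    rw [← div_eq_one, ← QuotientGroup.mk_div, QuotientGroup.eq_one_iff]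
    simpa [div_eq_mul_inv] using hmemN k hk m
  -- μbar
  have hker1 : Subgroup.normalClosure S ≤ (φ.comp μ).ker := by
    refine Subgroup.normalClosure_le_normal ?_
    rintro x ⟨k, hk, m, rfl⟩
    have hk1 : φ k = 1 := hk
    simp [MonoidHom.mem_ker, cm1M, hk1]
  refine ⟨QuotientGroup.lift _ (φ.comp μ) hker1, fun m => rfl, ?_, ?_, ?_⟩
  · intro p m
    simp [QuotientGroup.lift_mk, cm1M]
  · intro m n
    have : (QuotientGroup.mk m * QuotientGroup.mk n * (QuotientGroup.mk m)⁻¹ :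
        M ⧸ Subgroup.normalClosure S) = QuotientGroup.mk (m * n * m⁻¹) := by
      simp
    rw [this, cm2M]
  -- universal property
  have hker2 : Subgroup.normalClosure S ≤ h.ker := by
    refine Subgroup.normalClosure_le_normal ?_
    rintro x ⟨k, hk, m, rfl⟩
    have hk1 : φ k = 1 := hk
    simp [MonoidHom.mem_ker, hequiv, hk1]
  refine ⟨QuotientGroup.lift _ h hker2, ⟨fun m => rfl, ?_, ?_⟩, ?_⟩
  · intro p m
    simp [QuotientGroup.lift_mk, hequiv]
  · intro m
    simp [QuotientGroup.lift_mk, hcomm]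
  · rintro g ⟨hg1, -, -⟩
    refine MonoidHom.ext fun x => ?_
    induction x using QuotientGroup.induction_on with
    | H m => simp [hg1 m]
end

section
/- In a 2-crossed module L →^{∂₂} M →^{∂₁} P, the map ∂₂ : L → M together with the M-action on L defined by ᵐl = l·{∂₂(l)⁻¹, m} makes (L, M, ∂₂) a crossed module. -/
/-- In a 2-crossed module `L →^{∂₂} M →^{∂₁} P`, the `M`-action on `L` given by
`ᵐl = l·{∂₂(l)⁻¹, m}` makes `(L, M, ∂₂)` a crossed module: it is an action by group
automorphisms, `∂₂` is `M`-equivariant (CM1), and the Peiffer identity (CM2) holds. -/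
theorem stmt_8 {L M P : Type*} [Group L] [Group M] [Group P]
    (aL : P →* MulAut L) (aM : P →* MulAut M)
    (d2 : L →* M) (d1 : M →* P)
    (hn2 : d2.range.Normal) (hn1 : d1.range.Normal)
    (hcomp : ∀ l : L, d1 (d2 l) = 1)
    (heq2 : ∀ (p : P) (l : L), d2 (aL p l) = aM p (d2 l))
    (heq1 : ∀ (p : P) (m : M), d1 (aM p m) = p * d1 m * p⁻¹)
    (br : M → M → L)
    (aML : M → L → L)
    (hML : ∀ (m : M) (l : L), aML m l = l * br ((d2 l)⁻¹) m)
    (PL1 : ∀ m0 m1 : M, d2 (br m0 m1) = m0 * m1 * m0⁻¹ * (aM (d1 m0) m1)⁻¹)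
    (PL2 : ∀ l0 l1 : L, br (d2 l0) (d2 l1) = l0 * l1 * l0⁻¹ * l1⁻¹)
    (PL3a : ∀ m0 m1 m2 : M, br m0 (m1 * m2) = aML (m0 * m1 * m0⁻¹) (br m0 m2) * br m0 m1)
    (PL3b : ∀ m0 m1 m2 : M,
      br (m0 * m1) m2 = br m0 (m1 * m2 * m1⁻¹) * aL (d1 m0) (br m1 m2))
    (PL4a : ∀ (l : L) (m : M), br (d2 l) m = l * (aML m l)⁻¹)
    (PL4b : ∀ (m : M) (l : L), br m (d2 l) = aML m l * (aL (d1 m) l)⁻¹)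
    (PL5 : ∀ (p : P) (m0 m1 : M), aL p (br m0 m1) = br (aM p m0) (aM p m1)) :
    (∀ (m : M) (l l' : L), aML m (l * l') = aML m l * aML m l') ∧
    (∀ l : L, aML (1 : M) l = l) ∧
    (∀ (m m' : M) (l : L), aML (m * m') l = aML m (aML m' l)) ∧
    (∀ m : M, Function.Bijective (aML m)) ∧
    (∀ (m : M) (l : L), d2 (aML m l) = m * d2 l * m⁻¹) ∧
    (∀ l l' : L, aML (d2 l) l' = l * l' * l⁻¹) := by
  -- {1, m} = 1
  have br1 : ∀ m : M, br 1 m = 1 := by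
    intro m
    have h := PL3b 1 1 m
    simp only [one_mul, mul_one, map_one, MulAut.one_apply, inv_one] at h
    exact (left_eq_mul.mp h)
  -- {m, 1} = 1
  have am_one : ∀ m : M, aML m 1 = 1 := by
    intro m
    rw [hML]
    simp only [map_one, inv_one, one_mul, br1]
  have brm1 : ∀ m : M, br m 1 = 1 := by
    intro m
    have h := PL4b m 1
    simp only [map_one, am_one, inv_one, one_mul, mul_one] at h
    simpa using h
  -- the identity acts trivially
  have a1 : ∀ l : L, aML (1 : M) l = l := by
    intro l
    rw [hML, brm1, mul_one]
  -- alternative formula from PL4a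
  have alt : ∀ (m : M) (l : L), aML m l = (br (d2 l) m)⁻¹ * l := by
    intro m l
    rw [PL4a]
    group
  -- CM2 (Peiffer identity)
  have cm2 : ∀ l l' : L, aML (d2 l) l' = l * l' * l⁻¹ := by
    intro l l'
    rw [hML, ← map_inv, PL2]
    group
  -- CM1 (equivariance)
  have cm1 : ∀ (m : M) (l : L), d2 (aML m l) = m * d2 l * m⁻¹ := by
    intro m l
    rw [hML, map_mul, PL1]
    simp only [map_inv, hcomp, inv_one, map_one, MulAut.one_apply]
    group
  -- key conjugation lemma
  have key : ∀ (c : L) (m : M) (l : L), aML (d2 c * m) l = c * aML m l * c⁻¹ := by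
    intro c m l
    have h3 := PL3a (d2 l) (d2 c) m
    have e : d2 l * d2 c * (d2 l)⁻¹ = d2 (l * c * l⁻¹) := by
      simp [map_mul]
    rw [e, cm2, PL2, PL4a l m] at h3
    rw [alt, h3]
    group
  -- multiplicativity
  have mult : ∀ (m : M) (l l' : L), aML m (l * l') = aML m l * aML m l' := by
    intro m l l'
    have hc : d2 l' * m * (d2 l')⁻¹ = d2 (br (d2 l') m) * m := by
      rw [PL1]
      simp only [hcomp, map_one, MulAut.one_apply]
      group
    rw [alt m (l * l'), map_mul, PL3b, hc]
    simp only [hcomp, map_one, MulAut.one_apply]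
    rw [PL4a l (d2 (br (d2 l') m) * m), key, alt m l, alt m l']
    group
  -- inverse compatibility
  have ainv : ∀ (m : M) (l : L), aML m l⁻¹ = (aML m l)⁻¹ := by
    intro m l
    have h := mult m l l⁻¹
    rw [mul_inv_cancel, am_one] at h
    exact eq_inv_of_mul_eq_one_right h.symm
  -- compatibility with multiplication in M
  have comp : ∀ (m m' : M) (l : L), aML (m * m') l = aML m (aML m' l) := by
    intro m m' l
    have h3 := PL3a (d2 l) m m'
    have e : d2 l * m * (d2 l)⁻¹ = d2 (br (d2 l) m) * m := by
      rw [PL1]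
      simp only [hcomp, map_one, MulAut.one_apply]
      group
    rw [e, key] at h3
    rw [alt (m * m') l, h3, alt m' l, mult, ainv, alt m l]
    group
  -- bijectivity
  have bij : ∀ m : M, Function.Bijective (aML m) := by
    intro m
    refine Function.bijective_iff_has_inverse.mpr ⟨aML m⁻¹, fun l => ?_, fun l => ?_⟩
    · rw [← comp, inv_mul_cancel, a1]
    · rw [← comp, mul_inv_cancel, a1]
  exact ⟨mult, a1, comp, bij, cm1, cm2⟩
end

section
/- Let ∂₁ : M → P be a pre-crossed module and ⟨M,M⟩ ≤ M the Peiffer subgroup generated by all Peiffer commutators ⟨m, m'⟩ = m·m'·m⁻¹·(^{∂₁(m)}m'⁻¹). Then ⟨M,M⟩ → M → P with the Peiffer lifting {m, m'} = ⟨m, m'⟩ is a 2-crossed module. -/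
/-- The Peiffer commutator `⟨m,m'⟩ = m·m'·m⁻¹·(^{∂₁m}m'⁻¹)` of a pre-crossed module. -/
def peifferComm {M P : Type*} [Group M] [Group P] (aM : P →* MulAut M) (d1 : M →* P)
    (m m' : M) : M :=
  m * m' * m⁻¹ * (aM (d1 m) m')⁻¹

section Aux

variable {M P : Type*} [Group M] [Group P] (aM : P →* MulAut M) (d1 : M →* P)

lemma peifferComm_d1 (pre : ∀ (p : P) (m : M), d1 (aM p m) = p * d1 m * p⁻¹)
    (m m' : M) : d1 (peifferComm aM d1 m m') = 1 := by
  simp only [peifferComm, map_mul, map_inv, pre]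
  group

lemma peifferComm_equivariant (pre : ∀ (p : P) (m : M), d1 (aM p m) = p * d1 m * p⁻¹)
    (p : P) (m m' : M) :
    aM p (peifferComm aM d1 m m') = peifferComm aM d1 (aM p m) (aM p m') := by
  have h : aM (d1 (aM p m)) (aM p m') = aM p (aM (d1 m) m') := by
    rw [pre, map_mul, map_mul, map_inv]
    simp [MulAut.mul_apply]
  simp only [peifferComm, map_mul, map_inv, h]

lemma mem_peiffer_d1 (pre : ∀ (p : P) (m : M), d1 (aM p m) = p * d1 m * p⁻¹)
    {x : M} (hx : x ∈ Subgroup.closure {x : M | ∃ m m' : M, x = peifferComm aM d1 m m'}) :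
    d1 x = 1 := by
  induction hx using Subgroup.closure_induction with
  | mem y hy => obtain ⟨m, m', rfl⟩ := hy; exact peifferComm_d1 aM d1 pre m m'
  | one => simp
  | mul a b _ _ ha hb => simp [ha, hb]
  | inv a _ ha => simp [ha]

lemma peifferComm_of_d1_eq_one {c : M} (hc : d1 c = 1) (b : M) :
    peifferComm aM d1 c b = c * b * c⁻¹ * b⁻¹ := by
  simp [peifferComm, hc]

end Aux

/-- For a pre-crossed module `∂₁ : M → P`, the Peiffer subgroup `⟨M,M⟩` generated by the
Peiffer commutators gives a 2-crossed module `⟨M,M⟩ → M → P` with Peiffer lifting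
`{m,m'} = ⟨m,m'⟩`: the subgroup is normal and `P`-stable (so it is a `P`-group and the
inclusion `∂₂` is `P`-equivariant), `∂₁∂₂ = 1`, and the axioms PL1–PL5 hold (PL1 is the
defining formula of the Peiffer commutator; in PL2–PL4 `∂₂` is the inclusion, so the
`l`-variables range over elements of `⟨M,M⟩`, and the `M`-action on `⟨M,M⟩` is
`ᵐl = l·⟨l⁻¹, m⟩`). -/
theorem stmt_9 {M P : Type*} [Group M] [Group P]
    (aM : P →* MulAut M) (d1 : M →* P)
    (pre : ∀ (p : P) (m : M), d1 (aM p m) = p * d1 m * p⁻¹) :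
    (∀ m m' : M, peifferComm aM d1 m m' ∈
      Subgroup.closure {x : M | ∃ m m' : M, x = peifferComm aM d1 m m'}) ∧
    (Subgroup.closure {x : M | ∃ m m' : M, x = peifferComm aM d1 m m'}).Normal ∧
    (∀ (p : P) (x : M), x ∈ Subgroup.closure {x : M | ∃ m m' : M, x = peifferComm aM d1 m m'}
      → aM p x ∈ Subgroup.closure {x : M | ∃ m m' : M, x = peifferComm aM d1 m m'}) ∧
    -- ∂₁ ∘ ∂₂ = 1
    (∀ x ∈ Subgroup.closure {x : M | ∃ m m' : M, x = peifferComm aM d1 m m'}, d1 x = 1) ∧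
    -- PL2
    (∀ x y : M, x ∈ Subgroup.closure {x : M | ∃ m m' : M, x = peifferComm aM d1 m m'} →
      y ∈ Subgroup.closure {x : M | ∃ m m' : M, x = peifferComm aM d1 m m'} →
      peifferComm aM d1 x y = x * y * x⁻¹ * y⁻¹) ∧
    -- PL3
    (∀ m0 m1 m2 : M, peifferComm aM d1 m0 (m1 * m2) =
      (peifferComm aM d1 m0 m2 *
        peifferComm aM d1 (peifferComm aM d1 m0 m2)⁻¹ (m0 * m1 * m0⁻¹)) *
      peifferComm aM d1 m0 m1) ∧
    (∀ m0 m1 m2 : M, peifferComm aM d1 (m0 * m1) m2 =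
      peifferComm aM d1 m0 (m1 * m2 * m1⁻¹) * aM (d1 m0) (peifferComm aM d1 m1 m2)) ∧
    -- PL4
    (∀ l m : M, l ∈ Subgroup.closure {x : M | ∃ m m' : M, x = peifferComm aM d1 m m'} →
      peifferComm aM d1 l m = l * (l * peifferComm aM d1 l⁻¹ m)⁻¹) ∧
    (∀ m l : M, l ∈ Subgroup.closure {x : M | ∃ m m' : M, x = peifferComm aM d1 m m'} →
      peifferComm aM d1 m l = (l * peifferComm aM d1 l⁻¹ m) * (aM (d1 m) l)⁻¹) ∧
    -- PL5
    (∀ (p : P) (m0 m1 : M),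
      aM p (peifferComm aM d1 m0 m1) = peifferComm aM d1 (aM p m0) (aM p m1)) := by
  set S := Subgroup.closure {x : M | ∃ m m' : M, x = peifferComm aM d1 m m'} with hS
  have hgen : ∀ m m' : M, peifferComm aM d1 m m' ∈ S := fun m m' =>
    Subgroup.subset_closure ⟨m, m', rfl⟩
  have hstab : ∀ (p : P) (x : M), x ∈ S → aM p x ∈ S := by
    intro p x hx
    induction hx using Subgroup.closure_induction with
    | mem y hy =>
        obtain ⟨m, m', rfl⟩ := hy
        rw [peifferComm_equivariant aM d1 pre]
        exact hgen _ _
    | one => simp [one_mem]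
    | mul a b _ _ ha hb => rw [map_mul]; exact mul_mem ha hb
    | inv a _ ha => rw [map_inv]; exact inv_mem ha
  have hnorm : S.Normal := by
    constructor
    intro n hn g
    have key : g * n * g⁻¹ = peifferComm aM d1 g n * aM (d1 g) n := by
      simp [peifferComm]
    rw [key]
    exact mul_mem (hgen g n) (hstab _ _ hn)
  have hd1 : ∀ x ∈ S, d1 x = 1 := fun x hx => mem_peiffer_d1 aM d1 pre hx
  refine ⟨hgen, hnorm, hstab, hd1, ?_, ?_, ?_, ?_, ?_, ?_⟩
  · -- PL2
    intro x y hx hy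
    simp [peifferComm, hd1 x hx]
  · -- PL3 (first)
    intro m0 m1 m2
    have h1 : d1 (peifferComm aM d1 m0 m2)⁻¹ = 1 := by
      rw [map_inv, peifferComm_d1 aM d1 pre, inv_one]
    rw [peifferComm_of_d1_eq_one aM d1 h1]
    simp only [peifferComm, map_mul, MulAut.mul_apply, map_inv]
    group
  · -- PL3 (second)
    intro m0 m1 m2
    simp only [peifferComm, map_mul, MulAut.mul_apply, map_inv]
    group
  · -- PL4 (first)
    intro l m hl
    have h1 : d1 l = 1 := hd1 l hl
    have h2 : d1 l⁻¹ = 1 := by rw [map_inv, h1, inv_one]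
    simp only [peifferComm, h1, h2, map_one, MulAut.one_apply]
    group
  · -- PL4 (second)
    intro m l hl
    have h2 : d1 l⁻¹ = 1 := by rw [map_inv, hd1 l hl, inv_one]
    simp only [peifferComm, h2, map_one, MulAut.one_apply]
    group
  · -- PL5
    exact peifferComm_equivariant aM d1 pre
end

section
/- Let H →^{∂₂} N →^{∂₁} Q be a 2-crossed module and φ : P → Q a group homomorphism. Define φ*(N) = {(n,p) | ∂₁(n) = φ(p)}, ∂₁*(n,p) = p, and ∂₂* : ∂₂⁻¹(Ker ∂₁) → φ*(N) by ∂₂*(h) = (∂₂(h), 1). With the P-actions ᵖ(n,p') = (^{φ(p)}n, pp'p⁻¹) and ᵖh = ^{φ(p)}h, and the Peiffer lifting {(n,p), (n',p')} := {n, n'}, the complex ∂₂⁻¹(Ker ∂₁) → φ*(N) → P is a 2-crossed module. -/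
/-- Pullback 2-crossed module: for a 2-crossed module `H →^{∂₂} N →^{∂₁} Q` and a
homomorphism `φ : P → Q`, the complex `∂₂⁻¹(Ker ∂₁) →^{∂₂*} φ*(N) →^{∂₁*} P`, with
`φ*(N) = {(n,p) | ∂₁(n) = φ(p)}`, `∂₂*(h) = (∂₂(h),1)`, `∂₁*(n,p) = p`, `P`-actions
`ᵖ(n,p') = (^{φp}n, pp'p⁻¹)` and `ᵖh = ^{φp}h`, and Peiffer lifting
`{(n,p),(n',p')} = {n,n'}`, is a 2-crossed module (fiber product a subgroup, actions
preserve everything, boundaries equivariant, PL1–PL5). -/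
theorem stmt_12 {H N P Q : Type*} [Group H] [Group N] [Group P] [Group Q]
    (aH : Q →* MulAut H) (aN : Q →* MulAut N)
    (d2 : H →* N) (d1 : N →* Q)
    (hn2 : d2.range.Normal) (hn1 : d1.range.Normal)
    (hcomp : ∀ h : H, d1 (d2 h) = 1)
    (heq2 : ∀ (q : Q) (h : H), d2 (aH q h) = aN q (d2 h))
    (heq1 : ∀ (q : Q) (n : N), d1 (aN q n) = q * d1 n * q⁻¹)
    (br : N → N → H)
    (aNH : N → H → H)
    (hNH : ∀ (n : N) (h : H), aNH n h = h * br ((d2 h)⁻¹) n)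
    (PL1 : ∀ n0 n1 : N, d2 (br n0 n1) = n0 * n1 * n0⁻¹ * (aN (d1 n0) n1)⁻¹)
    (PL2 : ∀ h0 h1 : H, br (d2 h0) (d2 h1) = h0 * h1 * h0⁻¹ * h1⁻¹)
    (PL3a : ∀ n0 n1 n2 : N, br n0 (n1 * n2) = aNH (n0 * n1 * n0⁻¹) (br n0 n2) * br n0 n1)
    (PL3b : ∀ n0 n1 n2 : N,
      br (n0 * n1) n2 = br n0 (n1 * n2 * n1⁻¹) * aH (d1 n0) (br n1 n2))
    (PL4a : ∀ (h : H) (n : N), br (d2 h) n = h * (aNH n h)⁻¹)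
    (PL4b : ∀ (n : N) (h : H), br n (d2 h) = aNH n h * (aH (d1 n) h)⁻¹)
    (PL5 : ∀ (q : Q) (n0 n1 : N), aH q (br n0 n1) = br (aN q n0) (aN q n1))
    (φ : P →* Q) :
    -- φ*(N) is a subgroup of N × P
    (∃ S : Subgroup (N × P), ∀ x : N × P, x ∈ S ↔ d1 x.1 = φ x.2) ∧
    -- ∂₂* lands in φ*(N) and ∂₁* ∘ ∂₂* = 1
    (∀ h : H, d1 (d2 h) = φ (1 : P)) ∧
    -- the P-action preserves φ*(N)
    (∀ (p : P) (x : N × P), d1 x.1 = φ x.2 → d1 (aN (φ p) x.1) = φ (p * x.2 * p⁻¹)) ∧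
    -- ∂₂* is P-equivariant
    (∀ (p : P) (h : H),
      ((d2 (aH (φ p) h), (1 : P)) : N × P) = ((aN (φ p) (d2 h)), p * 1 * p⁻¹)) ∧
    -- PL1
    (∀ x y : N × P, d1 x.1 = φ x.2 → d1 y.1 = φ y.2 →
      d2 (br x.1 y.1) = x.1 * y.1 * x.1⁻¹ * (aN (φ x.2) y.1)⁻¹ ∧
      (1 : P) = x.2 * y.2 * x.2⁻¹ * (x.2 * y.2⁻¹ * x.2⁻¹)) ∧
    -- PL2
    (∀ h h' : H, d2 h ∈ d1.ker → d2 h' ∈ d1.ker →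
      br (d2 h) (d2 h') = h * h' * h⁻¹ * h'⁻¹) ∧
    -- PL3
    (∀ x y z : N × P, d1 x.1 = φ x.2 → d1 y.1 = φ y.2 → d1 z.1 = φ z.2 →
      br x.1 (y.1 * z.1) = aNH (x.1 * y.1 * x.1⁻¹) (br x.1 z.1) * br x.1 y.1) ∧
    (∀ x y z : N × P, d1 x.1 = φ x.2 → d1 y.1 = φ y.2 → d1 z.1 = φ z.2 →
      br (x.1 * y.1) z.1 = br x.1 (y.1 * z.1 * y.1⁻¹) * aH (φ x.2) (br y.1 z.1)) ∧
    -- PL4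
    (∀ (h : H) (x : N × P), d2 h ∈ d1.ker → d1 x.1 = φ x.2 →
      br (d2 h) x.1 * br x.1 (d2 h) = h * (aH (φ x.2) h)⁻¹) ∧
    -- PL5
    (∀ (p : P) (x y : N × P), d1 x.1 = φ x.2 → d1 y.1 = φ y.2 →
      aH (φ p) (br x.1 y.1) = br (aN (φ p) x.1) (aN (φ p) y.1)) := by
  refine ⟨⟨{ carrier := {x : N × P | d1 x.1 = φ x.2}
             one_mem' := by simp only [Set.mem_setOf_eq, Prod.fst_one, Prod.snd_one, map_one]
             mul_mem' := by intro a b ha hb; simp only [Set.mem_setOf_eq, Prod.fst_mul, Prod.snd_mul, map_mul] at *; rw [ha, hb]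
             inv_mem' := by intro a ha; simp only [Set.mem_setOf_eq, Prod.fst_inv, Prod.snd_inv, map_inv] at *; rw [ha] }, fun x => Iff.rfl⟩,
    ?_, ?_, ?_, ?_, ?_, ?_, ?_, ?_, ?_⟩
  · intro h; simp [hcomp]
  · intro p x hx; rw [heq1, hx]; simp
  · intro p h; simp [heq2]
  · intro x y hx hy
    refine ⟨by rw [PL1, hx], by group⟩
  · intro h h' _ _; exact PL2 h h'
  · intro x y z _ _ _; exact PL3a x.1 y.1 z.1
  · intro x y z hx _ _; rw [PL3b, hx]
  · intro h x _ hx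
    rw [PL4a, PL4b, hx, mul_assoc, inv_mul_cancel_left]
  · intro p x y _ _; exact PL5 (φ p) x.1 y.1
end
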